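/- Let m̃(k) = 1 + k₂²/k₁² + (1/2)(β - 1/3)k₁² with β > 1/3. For fixed θ ∈ (1/2, 1), the estimate |m̃(D)^{-1} χ_ε(D)(((χ_ε(D)+I)ζ)((χ_ε(D)-I)ρ))|_{Y^{1+θ}} ≲ ε |ζ|_{Y^{1+θ}} |ρ|_{Y^{1+θ}} holds for all ζ, ρ ∈ Y^{1+θ}. -/

import Mathlib

open MeasureTheory Set
open scoped ENNReal NNReal

/-- The anisotropic KP weight `(1 + k₁² + k₂²/k₁²)^r`. -/
noncomputable def wgt (r : ℝ) (k : ℝ × ℝ) : ℝ := (1 + k.1 ^ 2 + k.2 ^ 2 / k.1 ^ 2) ^ r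

/-- The squared `Y^r` norm, computed on the Fourier side. -/
noncomputable def YnormSq (r : ℝ) (g : ℝ × ℝ → ℂ) : ℝ := ∫ k : ℝ × ℝ, wgt r k * ‖g k‖ ^ 2

/-- The KP symbol `m̃(k) = 1 + k₂²/k₁² + ½(β - 1/3)k₁²`. -/
noncomputable def mKP (β : ℝ) (k : ℝ × ℝ) : ℝ :=
  1 + k.2 ^ 2 / k.1 ^ 2 + (1 / 2) * (β - 1 / 3) * k.1 ^ 2

/-- Characteristic function (as a complex scalar) of the cone `C_ε`. -/
noncomputable def chiC (ε δ : ℝ) (k : ℝ × ℝ) : ℂ :=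
  if |k.1| ≤ δ / ε ∧ |k.2 / k.1| ≤ δ / ε then 1 else 0

/-- Convolution on the Fourier side (corresponding to a product in physical space). -/
noncomputable def conv (f g : ℝ × ℝ → ℂ) : ℝ × ℝ → ℂ := fun k => ∫ j : ℝ × ℝ, f j * g (k - j)


noncomputable def bse (k : ℝ × ℝ) : ℝ := 1 + k.1 ^ 2 + k.2 ^ 2 / k.1 ^ 2

lemma bse_one_le (k : ℝ × ℝ) : 1 ≤ bse k := by
  have h1 : (0:ℝ) ≤ k.1 ^ 2 := sq_nonneg _
  have h2 : (0:ℝ) ≤ k.2 ^ 2 / k.1 ^ 2 := div_nonneg (sq_nonneg _) (sq_nonneg _)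
  unfold bse; linarith

lemma bse_pos (k : ℝ × ℝ) : 0 < bse k := lt_of_lt_of_le one_pos (bse_one_le k)

lemma wgt_eq (r : ℝ) (k : ℝ × ℝ) : wgt r k = bse k ^ r := rfl

lemma bse_meas : Measurable bse := by
  unfold bse
  exact (measurable_const.add ((measurable_fst.pow_const 2))).add
    ((measurable_snd.pow_const 2).div (measurable_fst.pow_const 2))

lemma tail_lintegral {a R : ℝ} (ha : a < -1) (hR : 0 < R) :
    ∫⁻ y in Set.Ioi R, ENNReal.ofReal (y ^ a) = ENNReal.ofReal (-R ^ (a + 1) / (a + 1)) := by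
  rw [← ofReal_integral_eq_lintegral_ofReal (integrableOn_Ioi_rpow_of_lt ha hR)
    ((ae_restrict_iff' measurableSet_Ioi).2 (Filter.Eventually.of_forall
      (fun y hy => Real.rpow_nonneg (le_of_lt (lt_trans hR hy)) a))),
    integral_Ioi_rpow_of_lt ha hR]

lemma neg_lintegral (G : ℝ → ℝ≥0∞) (hG : Measurable G) :
    ∫⁻ y : ℝ, G (-y) = ∫⁻ y, G y := by
  conv_rhs => rw [← Measure.map_neg_eq_self (volume : Measure ℝ)]
  rw [lintegral_map hG measurable_neg]

lemma even_split (F : ℝ → ℝ≥0∞) (hF : Measurable F) (hev : ∀ y, F (-y) = F y) (R : ℝ)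
    (hR : 0 ≤ R) :
    ∫⁻ y, F y ≤ (∫⁻ y in Set.Icc (-R) R, F y) + 2 * ∫⁻ y in Set.Ioi R, F y := by
  have hIio : ∫⁻ y in Set.Iio (-R), F y = ∫⁻ y in Set.Ioi R, F y := by
    rw [← lintegral_indicator measurableSet_Iio, ← lintegral_indicator measurableSet_Ioi,
      ← neg_lintegral _ (hF.indicator measurableSet_Iio)]
    congr 1; funext y
    by_cases hy : y ∈ Set.Ioi R
    · rw [Set.indicator_of_mem hy, Set.indicator_of_mem (show -y ∈ Set.Iio (-R) by simpa using hy), hev]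
    · rw [Set.indicator_of_notMem hy, Set.indicator_of_notMem (by simpa using hy)]
  have hcover : (Set.univ : Set ℝ) = Set.Icc (-R) R ∪ (Set.Ioi R ∪ Set.Iio (-R)) := by
    ext y; simp only [Set.mem_univ, true_iff, Set.mem_union, Set.mem_Icc, Set.mem_Ioi, Set.mem_Iio]
    rcases le_or_gt y R with h | h
    · rcases le_or_gt (-R) y with h' | h'
      · exact Or.inl ⟨h', h⟩
      · exact Or.inr (Or.inr h')
    · exact Or.inr (Or.inl h)
  calc ∫⁻ y, F y = ∫⁻ y in (Set.univ : Set ℝ), F y := by rw [Measure.restrict_univ]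
    _ ≤ (∫⁻ y in Set.Icc (-R) R, F y) + ((∫⁻ y in Set.Ioi R, F y) + ∫⁻ y in Set.Iio (-R), F y) := by
        rw [hcover]
        exact le_trans (lintegral_union_le _ _ _)
          (add_le_add le_rfl (lintegral_union_le _ _ _))
    _ = (∫⁻ y in Set.Icc (-R) R, F y) + 2 * ∫⁻ y in Set.Ioi R, F y := by
        rw [hIio, two_mul]

lemma sq_half_rpow (X : ℝ≥0∞) : (X ^ ((1:ℝ)/2)) ^ 2 = X := by
  rw [← ENNReal.rpow_natCast (X ^ ((1:ℝ)/2)) 2, ← ENNReal.rpow_mul]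
  norm_num

lemma lintegral_sq_CS {α : Type*} [MeasurableSpace α] (μ : Measure α) (u v : α → ℝ≥0∞)
    (hu : AEMeasurable u μ) (hv : AEMeasurable v μ) :
    (∫⁻ a, u a * v a ∂μ) ^ 2 ≤ (∫⁻ a, (u a) ^ 2 ∂μ) * (∫⁻ a, (v a) ^ 2 ∂μ) := by
  have hconj : Real.HolderConjugate 2 2 := Real.HolderConjugate.two_two
  have h := ENNReal.lintegral_mul_le_Lp_mul_Lq μ hconj hu hv
  calc (∫⁻ a, u a * v a ∂μ) ^ 2
      ≤ ((∫⁻ a, u a ^ (2:ℝ) ∂μ) ^ ((1:ℝ)/2) * (∫⁻ a, v a ^ (2:ℝ) ∂μ) ^ ((1:ℝ)/2)) ^ 2 :=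
        pow_le_pow_left₀ zero_le (by simpa using h) 2
    _ = (∫⁻ a, (u a) ^ 2 ∂μ) * (∫⁻ a, (v a) ^ 2 ∂μ) := by
        rw [mul_pow, sq_half_rpow, sq_half_rpow]
        congr 1 <;> · congr 1; funext a; rw [← ENNReal.rpow_natCast]; norm_num

lemma lintegral_mul_sq_le {α : Type*} [MeasurableSpace α] (μ : Measure α) (u v : α → ℝ≥0∞)
    (hu : AEMeasurable u μ) (hv : AEMeasurable v μ) :
    (∫⁻ a, u a * v a ∂μ) ^ 2 ≤ (∫⁻ a, u a ∂μ) * (∫⁻ a, u a * (v a) ^ 2 ∂μ) := by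
  have key : ∀ a, u a * v a = (u a ^ ((1:ℝ)/2)) * (u a ^ ((1:ℝ)/2) * v a) := by
    intro a
    rw [← mul_assoc, ← sq, sq_half_rpow]
  have h := lintegral_sq_CS μ (fun a => u a ^ ((1:ℝ)/2)) (fun a => u a ^ ((1:ℝ)/2) * v a)
    (hu.pow_const _) ((hu.pow_const _).mul hv)
  simp only [mul_pow, sq_half_rpow] at h
  calc (∫⁻ a, u a * v a ∂μ) ^ 2 = (∫⁻ a, (u a ^ ((1:ℝ)/2)) * (u a ^ ((1:ℝ)/2) * v a) ∂μ) ^ 2 := by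
        congr 1; exact lintegral_congr key
    _ ≤ (∫⁻ a, u a ∂μ) * (∫⁻ a, u a * (v a) ^ 2 ∂μ) := h


lemma rpow_two_eq (x : ℝ) : x ^ (2:ℝ) = x ^ (2:ℕ) := by
  rw [show (2:ℝ) = ((2:ℕ):ℝ) by norm_num, Real.rpow_natCast]

lemma inner_bound {θ x : ℝ} (hθ : 1/2 < θ) (hx : x ≠ 0) :
    ∫⁻ y : ℝ, ENNReal.ofReal ((1 + x^2 + y^2/x^2) ^ (-(1+θ):ℝ))
      ≤ ENNReal.ofReal (4 * ((1+x^2) ^ (-θ:ℝ))) := by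
  have hx2 : (0:ℝ) < x ^ 2 := by positivity
  set A : ℝ := 1 + x ^ 2 with hA
  have hApos : (0:ℝ) < A := by positivity
  have hA1 : (1:ℝ) ≤ A := by nlinarith
  have habs : |x| ≤ Real.sqrt A := by
    rw [← Real.sqrt_sq_eq_abs]
    exact Real.sqrt_le_sqrt (by nlinarith)
  have hsq : (0:ℝ) < Real.sqrt A := Real.sqrt_pos.mpr hApos
  set R : ℝ := |x| * Real.sqrt A with hR
  have hRpos : 0 < R := mul_pos (abs_pos.mpr hx) hsq
  have hRA : R ≤ A := by
    calc R ≤ Real.sqrt A * Real.sqrt A := mul_le_mul_of_nonneg_right habs hsq.le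
    _ = A := Real.mul_self_sqrt hApos.le
  have hexp : (-(1+θ):ℝ) ≤ 0 := by linarith
  have hAθ : (0:ℝ) ≤ A ^ (-θ:ℝ) := Real.rpow_nonneg hApos.le _
  have hFmeas : Measurable fun y : ℝ => ENNReal.ofReal ((A + y^2/x^2) ^ (-(1+θ):ℝ)) := by
    fun_prop
  have hFeven : ∀ y : ℝ, ENNReal.ofReal ((A + (-y)^2/x^2) ^ (-(1+θ):ℝ))
      = ENNReal.ofReal ((A + y^2/x^2) ^ (-(1+θ):ℝ)) := by intro y; rw [neg_sq]
  have split := even_split _ hFmeas hFeven R hRpos.le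
  have hIcc : (∫⁻ y in Set.Icc (-R) R, ENNReal.ofReal ((A + y^2/x^2) ^ (-(1+θ):ℝ)))
      ≤ ENNReal.ofReal (2 * A ^ (-θ:ℝ)) := by
    have hpt : ∀ y : ℝ, ENNReal.ofReal ((A + y^2/x^2) ^ (-(1+θ):ℝ))
        ≤ ENNReal.ofReal (A ^ (-(1+θ):ℝ)) := by
      intro y
      apply ENNReal.ofReal_le_ofReal
      exact Real.rpow_le_rpow_of_nonpos hApos
        (by nlinarith [div_nonneg (sq_nonneg y) (sq_nonneg x)]) hexp
    calc (∫⁻ y in Set.Icc (-R) R, ENNReal.ofReal ((A + y^2/x^2) ^ (-(1+θ):ℝ)))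
        ≤ ∫⁻ _ in Set.Icc (-R) R, ENNReal.ofReal (A ^ (-(1+θ):ℝ)) :=
          lintegral_mono fun y => hpt y
      _ = ENNReal.ofReal (A ^ (-(1+θ):ℝ)) * volume (Set.Icc (-R) R) := setLIntegral_const _ _
      _ = ENNReal.ofReal (A ^ (-(1+θ):ℝ)) * ENNReal.ofReal (2 * R) := by
          rw [Real.volume_Icc]; congr 1; ring
      _ = ENNReal.ofReal (A ^ (-(1+θ):ℝ) * (2 * R)) := by
          rw [← ENNReal.ofReal_mul (Real.rpow_nonneg hApos.le _)]
      _ ≤ ENNReal.ofReal (2 * A ^ (-θ:ℝ)) := by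
          apply ENNReal.ofReal_le_ofReal
          have h0 := Real.rpow_nonneg hApos.le (-(1+θ):ℝ)
          have h1 : A ^ (-(1+θ):ℝ) * (2 * R) ≤ A ^ (-(1+θ):ℝ) * (2 * A) := by nlinarith
          have h2 : A ^ (-(1+θ):ℝ) * (2 * A) = 2 * A ^ (-θ:ℝ) := by
            rw [show A ^ (-θ:ℝ) = A ^ (-(1+θ) + 1 :ℝ) by ring_nf,
              Real.rpow_add hApos, Real.rpow_one]; ring
          linarith
  have hIoi : (∫⁻ y in Set.Ioi R, ENNReal.ofReal ((A + y^2/x^2) ^ (-(1+θ):ℝ)))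
      ≤ ENNReal.ofReal (A ^ (-θ:ℝ)) := by
    have hgm : Measurable fun y : ℝ =>
        ENNReal.ofReal ((x^2) ^ ((1+θ):ℝ) * y ^ (-(2+2*θ):ℝ)) :=
      by fun_prop
    have hpt : ∀ y ∈ Set.Ioi R, ENNReal.ofReal ((A + y^2/x^2) ^ (-(1+θ):ℝ))
        ≤ ENNReal.ofReal ((x^2) ^ ((1+θ):ℝ) * y ^ (-(2+2*θ):ℝ)) := by
      intro y hy
      have hy0 : (0:ℝ) < y := lt_trans hRpos hy
      apply ENNReal.ofReal_le_ofReal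
      have step1 : (A + y^2/x^2) ^ (-(1+θ):ℝ) ≤ (y^2/x^2) ^ (-(1+θ):ℝ) :=
        Real.rpow_le_rpow_of_nonpos (by positivity) (by nlinarith [hx2]) hexp
      have step2 : (y^2/x^2 : ℝ) ^ (-(1+θ):ℝ) = (x^2) ^ ((1+θ):ℝ) * y ^ (-(2+2*θ):ℝ) := by
        rw [Real.div_rpow (sq_nonneg y) (sq_nonneg x), Real.rpow_neg (sq_nonneg x),
          div_eq_mul_inv, inv_inv, mul_comm]
        congr 1
        rw [← Real.rpow_natCast y 2, ← Real.rpow_mul hy0.le]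
        congr 1; push_cast; ring
      rw [← step2]; exact step1
    have e1 : ((x:ℝ)^2) ^ ((1+θ):ℝ) = |x| ^ ((2+2*θ):ℝ) := by
      rw [← sq_abs, ← rpow_two_eq, ← Real.rpow_mul (abs_nonneg x)]
      congr 1; ring
    have e2 : R ^ (-(1+2*θ):ℝ) = |x| ^ (-(1+2*θ):ℝ) * (Real.sqrt A) ^ (-(1+2*θ):ℝ) :=
      Real.mul_rpow (abs_nonneg x) (Real.sqrt_nonneg A)
    have e3 : |x| ^ ((2+2*θ):ℝ) * |x| ^ (-(1+2*θ):ℝ) = |x| := by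
      rw [← Real.rpow_add (abs_pos.mpr hx), show ((2+2*θ) + -(1+2*θ) : ℝ) = 1 by ring,
        Real.rpow_one]
    have e4 : (Real.sqrt A) ^ (-(1+2*θ):ℝ) = (Real.sqrt A)⁻¹ * A ^ (-θ:ℝ) := by
      rw [show (-(1+2*θ):ℝ) = (-1) + (2:ℝ)*(-θ) by ring, Real.rpow_add hsq,
        Real.rpow_neg_one, Real.rpow_mul (Real.sqrt_nonneg A), rpow_two_eq,
        Real.sq_sqrt hApos.le]
    have hxs : |x| * (Real.sqrt A)⁻¹ ≤ 1 := by
      have h := mul_le_mul_of_nonneg_right habs (inv_nonneg.mpr hsq.le)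
      rwa [mul_inv_cancel₀ hsq.ne'] at h
    have hcomb : ((x:ℝ)^2) ^ ((1+θ):ℝ) * (R ^ (-(1+2*θ):ℝ) / (1+2*θ)) ≤ A ^ (-θ:ℝ) := by
      calc ((x:ℝ)^2) ^ ((1+θ):ℝ) * (R ^ (-(1+2*θ):ℝ) / (1+2*θ))
          ≤ ((x:ℝ)^2) ^ ((1+θ):ℝ) * R ^ (-(1+2*θ):ℝ) :=
            mul_le_mul_of_nonneg_left
              (div_le_self (Real.rpow_nonneg hRpos.le _) (by linarith))
              (Real.rpow_nonneg (sq_nonneg x) _)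
        _ = |x| * ((Real.sqrt A)⁻¹ * A ^ (-θ:ℝ)) := by
            rw [e1, e2, ← mul_assoc, e3, e4]
        _ ≤ 1 * A ^ (-θ:ℝ) := by
            rw [← mul_assoc]
            exact mul_le_mul_of_nonneg_right hxs hAθ
        _ = A ^ (-θ:ℝ) := one_mul _
    calc (∫⁻ y in Set.Ioi R, ENNReal.ofReal ((A + y^2/x^2) ^ (-(1+θ):ℝ)))
        ≤ ∫⁻ y in Set.Ioi R, ENNReal.ofReal ((x^2) ^ ((1+θ):ℝ) * y ^ (-(2+2*θ):ℝ)) :=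
          setLIntegral_mono hgm hpt
      _ = ENNReal.ofReal ((x^2) ^ ((1+θ):ℝ)) * ∫⁻ y in Set.Ioi R,
            ENNReal.ofReal (y ^ (-(2+2*θ):ℝ)) := by
          simp_rw [ENNReal.ofReal_mul (Real.rpow_nonneg (sq_nonneg x) _)]
          rw [lintegral_const_mul' _ _ ENNReal.ofReal_ne_top]
      _ = ENNReal.ofReal ((x^2) ^ ((1+θ):ℝ)) *
            ENNReal.ofReal (-R ^ (-(2+2*θ) + 1:ℝ) / (-(2+2*θ) + 1)) := by
          rw [tail_lintegral (by linarith) hRpos]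
      _ = ENNReal.ofReal ((x^2) ^ ((1+θ):ℝ) * (R ^ (-(1+2*θ):ℝ) / (1+2*θ))) := by
          rw [← ENNReal.ofReal_mul (Real.rpow_nonneg (sq_nonneg x) _)]
          congr 1
          rw [show (-(2+2*θ) + 1 : ℝ) = -(1+2*θ) by ring, neg_div_neg_eq]
      _ ≤ ENNReal.ofReal (A ^ (-θ:ℝ)) := ENNReal.ofReal_le_ofReal hcomb
  calc ∫⁻ y : ℝ, ENNReal.ofReal ((A + y^2/x^2) ^ (-(1+θ):ℝ))
      ≤ (∫⁻ y in Set.Icc (-R) R, ENNReal.ofReal ((A + y^2/x^2) ^ (-(1+θ):ℝ)))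
        + 2 * ∫⁻ y in Set.Ioi R, ENNReal.ofReal ((A + y^2/x^2) ^ (-(1+θ):ℝ)) := split
    _ ≤ ENNReal.ofReal (2 * A ^ (-θ:ℝ)) + 2 * ENNReal.ofReal (A ^ (-θ:ℝ)) :=
        add_le_add hIcc (mul_le_mul_right hIoi 2)
    _ = ENNReal.ofReal (4 * (A ^ (-θ:ℝ))) := by
        rw [two_mul (ENNReal.ofReal (A ^ (-θ:ℝ))), ← ENNReal.ofReal_add hAθ hAθ,
          ← ENNReal.ofReal_add (by positivity) (by positivity)]
        congr 1; ring

lemma Ifin {θ : ℝ} (hθ : 1/2 < θ) :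
    ∫⁻ k : ℝ × ℝ, ENNReal.ofReal (bse k ^ (-(1+θ):ℝ)) < ⊤ := by
  have m1 : Measurable fun t : ℝ => t ^ (-(1+θ):ℝ) := by fun_prop
  have hmeas : Measurable fun k : ℝ × ℝ => ENNReal.ofReal (bse k ^ (-(1+θ):ℝ)) :=
    ENNReal.measurable_ofReal.comp (m1.comp bse_meas)
  rw [show (volume : Measure (ℝ×ℝ)) = ((volume : Measure ℝ).prod volume) from rfl,
    lintegral_prod _ hmeas.aemeasurable]
  have hae : ∀ᵐ x : ℝ, x ≠ 0 := by
    rw [MeasureTheory.ae_iff]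
    have hset : {x : ℝ | ¬ x ≠ 0} = {0} := by ext x; simp [not_not]
    rw [hset]; exact Real.volume_singleton
  have key : ∀ᵐ x : ℝ, (∫⁻ y : ℝ, ENNReal.ofReal (bse (x, y) ^ (-(1+θ):ℝ)))
      ≤ ENNReal.ofReal (4 * ((1+x^2) ^ (-θ:ℝ))) := by
    refine hae.mono fun x hxne => ?_
    have h := inner_bound hθ hxne
    simpa [bse] using h
  calc (∫⁻ x : ℝ, ∫⁻ y : ℝ, ENNReal.ofReal (bse (x, y) ^ (-(1+θ):ℝ)))
      ≤ ∫⁻ x : ℝ, ENNReal.ofReal (4 * ((1+x^2) ^ (-θ:ℝ))) := lintegral_mono_ae key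
    _ < ⊤ := by
        simp_rw [ENNReal.ofReal_mul (by norm_num : (0:ℝ) ≤ 4)]
        rw [lintegral_const_mul' _ _ ENNReal.ofReal_ne_top]
        refine ENNReal.mul_lt_top ENNReal.ofReal_lt_top ?_
        have hm : Measurable fun x : ℝ => ENNReal.ofReal ((1+x^2) ^ (-θ:ℝ)) := by fun_prop
        have hev : ∀ x : ℝ, ENNReal.ofReal ((1+(-x)^2) ^ (-θ:ℝ))
            = ENNReal.ofReal ((1+x^2) ^ (-θ:ℝ)) := by intro x; rw [neg_sq]
        have hsplit := even_split _ hm hev 1 zero_le_one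
        refine lt_of_le_of_lt hsplit (ENNReal.add_lt_top.mpr ⟨?_, ?_⟩)
        · calc (∫⁻ x in Set.Icc (-1:ℝ) 1, ENNReal.ofReal ((1+x^2) ^ (-θ:ℝ)))
              ≤ ∫⁻ _ in Set.Icc (-1:ℝ) 1, 1 := by
                refine lintegral_mono fun x => ?_
                exact ENNReal.ofReal_le_one.mpr
                  (Real.rpow_le_one_of_one_le_of_nonpos (by nlinarith) (by linarith))
            _ < ⊤ := by
                rw [setLIntegral_const, one_mul, Real.volume_Icc]
                exact ENNReal.ofReal_lt_top
        · have hpt : ∀ x ∈ Set.Ioi (1:ℝ), ENNReal.ofReal ((1+x^2) ^ (-θ:ℝ))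
              ≤ ENNReal.ofReal (x ^ (-(2*θ):ℝ)) := by
            intro x hx
            have hx1 : (1:ℝ) < x := hx
            apply ENNReal.ofReal_le_ofReal
            have s1 : ((1:ℝ)+x^2) ^ (-θ:ℝ) ≤ (x^2) ^ (-θ:ℝ) :=
              Real.rpow_le_rpow_of_nonpos (by positivity) (by nlinarith) (by linarith)
            have s2 : ((x:ℝ)^2) ^ (-θ:ℝ) = x ^ (-(2*θ):ℝ) := by
              rw [← rpow_two_eq, ← Real.rpow_mul (by linarith)]
              congr 1; ring
            rw [← s2]; exact s1
          have : (∫⁻ x in Set.Ioi (1:ℝ), ENNReal.ofReal ((1+x^2) ^ (-θ:ℝ)))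
              ≤ ENNReal.ofReal (-(1:ℝ) ^ (-(2*θ) + 1:ℝ) / (-(2*θ) + 1)) := by
            calc (∫⁻ x in Set.Ioi (1:ℝ), ENNReal.ofReal ((1+x^2) ^ (-θ:ℝ)))
                ≤ ∫⁻ x in Set.Ioi (1:ℝ), ENNReal.ofReal (x ^ (-(2*θ):ℝ)) :=
                  setLIntegral_mono (by fun_prop) hpt
              _ = ENNReal.ofReal (-(1:ℝ) ^ (-(2*θ) + 1:ℝ) / (-(2*θ) + 1)) :=
                  tail_lintegral (by linarith) one_pos
          exact ENNReal.mul_lt_top (by norm_num)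
            (lt_of_le_of_lt this ENNReal.ofReal_lt_top)

/-- Bilinear estimate (Lemma: `|m̃(D)⁻¹χ_ε(D)(((χ_ε(D)+I)ζ)((χ_ε(D)-I)ρ))|_{Y^{1+θ}}
≲ ε |ζ|_{Y^{1+θ}} |ρ|_{Y^{1+θ}}` for θ ∈ (1/2,1)), stated on the Fourier side with the
physical-space product expressed as a convolution. -/
theorem stmt9 (β δ θ : ℝ) (hβ : 1 / 3 < β) (hδ : 0 < δ) (hδ1 : δ < 1)
    (hθ : 1 / 2 < θ) (hθ1 : θ < 1) :
    ∃ C > (0 : ℝ), ∀ ε : ℝ, 0 < ε → ε < 1 → ∀ f g : ℝ × ℝ → ℂ,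
      Measurable f → Measurable g →
      Integrable (fun k => wgt (1 + θ) k * ‖f k‖ ^ 2) →
      Integrable (fun k => wgt (1 + θ) k * ‖g k‖ ^ 2) →
      Real.sqrt (YnormSq (1 + θ) (fun k => ((mKP β k : ℝ) : ℂ)⁻¹ * chiC ε δ k *
          conv (fun j => (chiC ε δ j + 1) * f j) (fun j => (chiC ε δ j - 1) * g j) k))
        ≤ C * ε * Real.sqrt (YnormSq (1 + θ) f) * Real.sqrt (YnormSq (1 + θ) g) := by
  classical
  set c : ℝ := min 1 ((β - 1/3)/2) with hcdef
  have hcpos : 0 < c := lt_min one_pos (by linarith)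
  have hc1 : c ≤ 1 := min_le_left _ _
  have hIfin := Ifin (θ := θ) hθ
  set Iθ : ℝ≥0∞ := ∫⁻ k : ℝ × ℝ, ENNReal.ofReal (bse k ^ (-(1+θ):ℝ)) with hIθdef
  set K : ℝ := 4 * (c⁻¹)^2 * (δ⁻¹)^2 * Iθ.toReal with hKdef
  have hKnn : 0 ≤ K := by positivity
  refine ⟨Real.sqrt K + 1, by positivity, ?_⟩
  intro ε hε hε1 f g hf hg hfi hgi
  set F1 : ℝ × ℝ → ℂ := fun j => (chiC ε δ j + 1) * f j with hF1def
  set G1 : ℝ × ℝ → ℂ := fun j => (chiC ε δ j - 1) * g j with hG1def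
  set h : ℝ × ℝ → ℂ := fun k => ((mKP β k : ℝ) : ℂ)⁻¹ * chiC ε δ k * conv F1 G1 k with hhdef
  -- measurability
  have hchi : Measurable (chiC ε δ) := by
    unfold chiC
    refine Measurable.ite ?_ measurable_const measurable_const
    have : {k : ℝ × ℝ | |k.1| ≤ δ / ε ∧ |k.2 / k.1| ≤ δ / ε}
        = {k : ℝ × ℝ | |k.1| ≤ δ / ε} ∩ {k : ℝ × ℝ | |k.2 / k.1| ≤ δ / ε} := rfl
    rw [this]
    exact (measurableSet_le measurable_fst.abs measurable_const).inter
      (measurableSet_le (measurable_snd.div measurable_fst).abs measurable_const)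
  have hF1m : Measurable F1 := (hchi.add measurable_const).mul hf
  have hG1m : Measurable G1 := (hchi.sub measurable_const).mul hg
  have hconvm : Measurable (conv F1 G1) := by
    have hsm : StronglyMeasurable fun p : (ℝ × ℝ) × (ℝ × ℝ) => F1 p.2 * G1 (p.1 - p.2) :=
      ((hF1m.comp measurable_snd).mul
        (hG1m.comp (measurable_fst.sub measurable_snd))).stronglyMeasurable
    exact hsm.integral_prod_right'.measurable
  have hmKPm : Measurable (mKP β) := by unfold mKP; fun_prop
  have hhm : Measurable h := by
    apply Measurable.mul _ hconvm
    exact ((Complex.measurable_ofReal.comp hmKPm).inv).mul hchi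
  -- basic positivity facts
  have hmKP_ge : ∀ k, c * bse k ≤ mKP β k := by
    intro k
    have h1 : (0:ℝ) ≤ k.2^2/k.1^2 := div_nonneg (sq_nonneg _) (sq_nonneg _)
    have h2 : (0:ℝ) ≤ k.1^2 := sq_nonneg _
    have hcle : c ≤ (β - 1/3)/2 := min_le_right _ _
    have e1 : c * k.1^2 ≤ ((β - 1/3)/2) * k.1^2 := mul_le_mul_of_nonneg_right hcle h2
    have e2 : c * (k.2^2/k.1^2) ≤ 1 * (k.2^2/k.1^2) := mul_le_mul_of_nonneg_right hc1 h1
    show c * (1 + k.1^2 + k.2^2/k.1^2) ≤ 1 + k.2^2/k.1^2 + (1/2) * (β - 1/3) * k.1^2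
    nlinarith
  have hmKP_pos : ∀ k, 0 < mKP β k := fun k =>
    lt_of_lt_of_le (mul_pos hcpos (bse_pos k)) (hmKP_ge k)
  have hWbound : ∀ k, wgt (1+θ) k * ((mKP β k)⁻¹)^2 ≤ (c⁻¹)^2 := by
    intro k
    have hb := bse_pos k
    have hb1 := bse_one_le k
    have hinv : (mKP β k)⁻¹ ≤ (c * bse k)⁻¹ :=
      inv_anti₀ (by positivity) (hmKP_ge k)
    have hsqle : ((mKP β k)⁻¹)^2 ≤ ((c * bse k)⁻¹)^2 :=
      pow_le_pow_left₀ (inv_nonneg.mpr (hmKP_pos k).le) hinv 2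
    have ekey : bse k ^ ((1+θ):ℝ) * ((bse k)^(2:ℕ))⁻¹ ≤ 1 := by
      have e : bse k ^ ((1+θ):ℝ) * ((bse k)^(2:ℕ))⁻¹ = bse k ^ ((1+θ) - 2 : ℝ) := by
        rw [← rpow_two_eq, ← Real.rpow_neg hb.le, ← Real.rpow_add hb]
        congr 1 <;> ring
      rw [e]
      exact Real.rpow_le_one_of_one_le_of_nonpos hb1 (by linarith)
    calc wgt (1+θ) k * ((mKP β k)⁻¹)^2
        ≤ bse k ^ ((1+θ):ℝ) * ((c * bse k)⁻¹)^2 := by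
          rw [wgt_eq]
          exact mul_le_mul_of_nonneg_left hsqle (Real.rpow_nonneg hb.le _)
      _ = (c⁻¹)^2 * (bse k ^ ((1+θ):ℝ) * ((bse k)^(2:ℕ))⁻¹) := by
          rw [mul_inv, mul_pow, inv_pow]; ring
      _ ≤ (c⁻¹)^2 * 1 := mul_le_mul_of_nonneg_left ekey (by positivity)
      _ = (c⁻¹)^2 := mul_one _
  -- the ENNReal auxiliary functions
  set Fe : ℝ × ℝ → ℝ≥0∞ := fun j => ENNReal.ofReal (2 * ‖f j‖) with hFedef
  set He : ℝ × ℝ → ℝ≥0∞ := fun j => ENNReal.ofReal (bse j ^ ((1:ℝ)/2) * ‖g j‖) with hHedef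
  have hFem : Measurable Fe := ENNReal.measurable_ofReal.comp (hf.norm.const_mul 2)
  have hHem : Measurable He := by
    apply ENNReal.measurable_ofReal.comp
    have hbm : Measurable fun j : ℝ × ℝ => bse j ^ ((1:ℝ)/2) :=
      (by fun_prop : Measurable fun t : ℝ => t ^ ((1:ℝ)/2)).comp bse_meas
    exact hbm.mul hg.norm
  have hchi_norm : ∀ k, ‖chiC ε δ k‖ ≤ 1 := by
    intro k; unfold chiC; split_ifs <;> simp
  have hF1bd : ∀ j, (‖F1 j‖₊ : ℝ≥0∞) ≤ Fe j := by
    intro j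
    rw [← enorm_eq_nnnorm, ← ofReal_norm]
    apply ENNReal.ofReal_le_ofReal
    calc ‖F1 j‖ = ‖chiC ε δ j + 1‖ * ‖f j‖ := norm_mul _ _
      _ ≤ 2 * ‖f j‖ := by
          apply mul_le_mul_of_nonneg_right ?_ (norm_nonneg _)
          calc ‖chiC ε δ j + 1‖ ≤ ‖chiC ε δ j‖ + ‖(1:ℂ)‖ := norm_add_le _ _
            _ ≤ 1 + 1 := by simpa using add_le_add_right (hchi_norm j) 1
            _ = 2 := by norm_num
  have hG1bd : ∀ j, (‖G1 j‖₊ : ℝ≥0∞) ≤ ENNReal.ofReal (ε/δ) * He j := by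
    intro j
    rw [← enorm_eq_nnnorm, ← ofReal_norm, ← ENNReal.ofReal_mul (by positivity)]
    apply ENNReal.ofReal_le_ofReal
    show ‖(chiC ε δ j - 1) * g j‖ ≤ ε/δ * (bse j ^ ((1:ℝ)/2) * ‖g j‖)
    by_cases hcone : |j.1| ≤ δ/ε ∧ |j.2 / j.1| ≤ δ/ε
    · have hone : chiC ε δ j = 1 := if_pos hcone
      rw [hone]
      simp only [sub_self, zero_mul, norm_zero]
      exact mul_nonneg (by positivity)
        (mul_nonneg (Real.rpow_nonneg (bse_pos j).le _) (norm_nonneg _))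
    · have hzero : chiC ε δ j = 0 := if_neg hcone
      have hnorm : ‖(chiC ε δ j - 1) * g j‖ = ‖g j‖ := by
        rw [hzero]; simp
      have hde : (0:ℝ) < δ/ε := div_pos hδ hε
      have hbge : (δ/ε)^2 ≤ bse j := by
        push_neg at hcone
        rcases le_or_gt |j.1| (δ/ε) with h1 | h1
        · have h2 := hcone h1
          have h3 : (δ/ε)^2 ≤ (j.2/j.1)^2 := by
            rw [← sq_abs (j.2/j.1)]
            exact pow_le_pow_left₀ hde.le h2.le 2
          have h4 : (j.2/j.1)^2 = j.2^2/j.1^2 := div_pow _ _ _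
          have h5 : (0:ℝ) ≤ j.1^2 := sq_nonneg _
          show (δ/ε)^2 ≤ 1 + j.1^2 + j.2^2/j.1^2
          linarith [h4 ▸ h3]
        · have h3 : (δ/ε)^2 ≤ |j.1|^2 := pow_le_pow_left₀ hde.le h1.le 2
          rw [sq_abs] at h3
          have h4 : (0:ℝ) ≤ j.2^2/j.1^2 := div_nonneg (sq_nonneg _) (sq_nonneg _)
          show (δ/ε)^2 ≤ 1 + j.1^2 + j.2^2/j.1^2
          linarith
      have hsqrt : δ/ε ≤ bse j ^ ((1:ℝ)/2) := by
        have hle : ((δ/ε)^2 : ℝ) ^ ((1:ℝ)/2) ≤ bse j ^ ((1:ℝ)/2) :=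
          Real.rpow_le_rpow (by positivity) hbge (by norm_num)
        rwa [show ((δ/ε)^2 : ℝ) ^ ((1:ℝ)/2) = δ/ε by
          rw [← rpow_two_eq, ← Real.rpow_mul hde.le]; norm_num] at hle
      have h1le : (1:ℝ) ≤ (ε/δ) * bse j ^ ((1:ℝ)/2) := by
        calc (1:ℝ) = (ε/δ) * (δ/ε) := by field_simp
          _ ≤ (ε/δ) * bse j ^ ((1:ℝ)/2) :=
            mul_le_mul_of_nonneg_left hsqrt (by positivity)
      calc ‖(chiC ε δ j - 1) * g j‖ = ‖g j‖ := hnorm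
        _ = 1 * ‖g j‖ := (one_mul _).symm
        _ ≤ ((ε/δ) * bse j ^ ((1:ℝ)/2)) * ‖g j‖ :=
            mul_le_mul_of_nonneg_right h1le (norm_nonneg _)
        _ = ε/δ * (bse j ^ ((1:ℝ)/2) * ‖g j‖) := by ring
  have hconvbd : ∀ k, (‖conv F1 G1 k‖₊ : ℝ≥0∞)
      ≤ ENNReal.ofReal (ε/δ) * ∫⁻ j, Fe j * He (k - j) := by
    intro k
    calc (‖conv F1 G1 k‖₊ : ℝ≥0∞) ≤ ∫⁻ j, (‖F1 j * G1 (k - j)‖₊ : ℝ≥0∞) :=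
        enorm_integral_le_lintegral_enorm _
      _ = ∫⁻ j, (‖F1 j‖₊ : ℝ≥0∞) * (‖G1 (k - j)‖₊ : ℝ≥0∞) := by
          simp_rw [nnnorm_mul, ENNReal.coe_mul]
      _ ≤ ∫⁻ j, Fe j * (ENNReal.ofReal (ε/δ) * He (k - j)) :=
          lintegral_mono fun j => mul_le_mul' (hF1bd j) (hG1bd (k - j))
      _ = ENNReal.ofReal (ε/δ) * ∫⁻ j, Fe j * He (k - j) := by
          rw [← lintegral_const_mul' (ENNReal.ofReal (ε/δ)) _ ENNReal.ofReal_ne_top]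
          congr 1; funext j; ring
  -- pointwise bound on the weighted integrand
  have hwgt_nn : ∀ k, 0 ≤ wgt (1+θ) k := fun k => by
    rw [wgt_eq]; exact Real.rpow_nonneg (bse_pos k).le _
  have hpoint : ∀ k, ENNReal.ofReal (wgt (1+θ) k * ‖h k‖^2)
      ≤ ENNReal.ofReal ((c⁻¹)^2) * ENNReal.ofReal (ε/δ) ^ 2
        * (∫⁻ j, Fe j * He (k - j)) ^ 2 := by
    intro k
    have hnh : ‖h k‖ ≤ (mKP β k)⁻¹ * ‖conv F1 G1 k‖ := by
      show ‖((mKP β k : ℝ) : ℂ)⁻¹ * chiC ε δ k * conv F1 G1 k‖ ≤ _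
      rw [norm_mul, norm_mul]
      have h1 : ‖(((mKP β k : ℝ)) : ℂ)⁻¹‖ = (mKP β k)⁻¹ := by
        rw [norm_inv, Complex.norm_real, Real.norm_eq_abs, abs_of_pos (hmKP_pos k)]
      rw [h1]
      calc (mKP β k)⁻¹ * ‖chiC ε δ k‖ * ‖conv F1 G1 k‖
          ≤ (mKP β k)⁻¹ * 1 * ‖conv F1 G1 k‖ := by
            apply mul_le_mul_of_nonneg_right _ (norm_nonneg _)
            exact mul_le_mul_of_nonneg_left (hchi_norm k)
              (inv_nonneg.mpr (hmKP_pos k).le)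
        _ = (mKP β k)⁻¹ * ‖conv F1 G1 k‖ := by rw [mul_one]
    calc ENNReal.ofReal (wgt (1+θ) k * ‖h k‖^2)
        ≤ ENNReal.ofReal (wgt (1+θ) k * ((mKP β k)⁻¹ * ‖conv F1 G1 k‖)^2) := by
          apply ENNReal.ofReal_le_ofReal
          exact mul_le_mul_of_nonneg_left
            (pow_le_pow_left₀ (norm_nonneg _) hnh 2) (hwgt_nn k)
      _ = ENNReal.ofReal ((wgt (1+θ) k * ((mKP β k)⁻¹)^2) * ‖conv F1 G1 k‖^2) := by
          congr 1; ring
      _ = ENNReal.ofReal (wgt (1+θ) k * ((mKP β k)⁻¹)^2)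
            * ((‖conv F1 G1 k‖₊ : ℝ≥0∞))^2 := by
          rw [ENNReal.ofReal_mul (mul_nonneg (hwgt_nn k) (sq_nonneg _)),
            ENNReal.ofReal_pow (norm_nonneg _), ofReal_norm, enorm_eq_nnnorm]
      _ ≤ ENNReal.ofReal ((c⁻¹)^2)
            * (ENNReal.ofReal (ε/δ) * ∫⁻ j, Fe j * He (k - j))^2 :=
          mul_le_mul' (ENNReal.ofReal_le_ofReal (hWbound k))
            (pow_le_pow_left' (hconvbd k) 2)
      _ = ENNReal.ofReal ((c⁻¹)^2) * ENNReal.ofReal (ε/δ) ^ 2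
            * (∫⁻ j, Fe j * He (k - j)) ^ 2 := by
          rw [mul_pow, ← mul_assoc]
  -- the Y-norm of f and g on the ENNReal side
  have hYfnn : (0:ℝ) ≤ YnormSq (1+θ) f :=
    integral_nonneg fun k => mul_nonneg (hwgt_nn k) (sq_nonneg _)
  have hYgnn : (0:ℝ) ≤ YnormSq (1+θ) g :=
    integral_nonneg fun k => mul_nonneg (hwgt_nn k) (sq_nonneg _)
  have hLf : (∫⁻ j, ENNReal.ofReal (wgt (1+θ) j * ‖f j‖^2))
      = ENNReal.ofReal (YnormSq (1+θ) f) :=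
    (ofReal_integral_eq_lintegral_ofReal hfi
      (Filter.Eventually.of_forall fun k => mul_nonneg (hwgt_nn k) (sq_nonneg _))).symm
  have hLg : (∫⁻ j, ENNReal.ofReal (wgt (1+θ) j * ‖g j‖^2))
      = ENNReal.ofReal (YnormSq (1+θ) g) :=
    (ofReal_integral_eq_lintegral_ofReal hgi
      (Filter.Eventually.of_forall fun k => mul_nonneg (hwgt_nn k) (sq_nonneg _))).symm
  -- bound on ∫⁻ Fe
  have hFeCS : (∫⁻ j, Fe j)^2 ≤ ENNReal.ofReal 4 * Iθ
      * ENNReal.ofReal (YnormSq (1+θ) f) := by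
    have hsplit : ∀ j, Fe j = ENNReal.ofReal 2 *
        (ENNReal.ofReal (bse j ^ (-(1+θ)/2 : ℝ))
          * ENNReal.ofReal (bse j ^ ((1+θ)/2 : ℝ) * ‖f j‖)) := by
      intro j
      have hb := bse_pos j
      have hone : bse j ^ (-(1+θ)/2 : ℝ) * bse j ^ ((1+θ)/2 : ℝ) = 1 := by
        rw [← Real.rpow_add hb, show (-(1+θ)/2 + (1+θ)/2 : ℝ) = 0 by ring, Real.rpow_zero]
      simp only [hFedef]
      rw [← ENNReal.ofReal_mul (Real.rpow_nonneg hb.le _),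
        ← ENNReal.ofReal_mul (by norm_num)]
      congr 1
      calc 2 * ‖f j‖ = 2 * ((bse j ^ (-(1+θ)/2 : ℝ) * bse j ^ ((1+θ)/2 : ℝ)) * ‖f j‖) := by
            rw [hone, one_mul]
        _ = 2 * (bse j ^ (-(1+θ)/2 : ℝ) * (bse j ^ ((1+θ)/2 : ℝ) * ‖f j‖)) := by ring
    have hPm : Measurable fun j : ℝ × ℝ => ENNReal.ofReal (bse j ^ (-(1+θ)/2 : ℝ)) := by
      apply ENNReal.measurable_ofReal.comp
      exact (by fun_prop : Measurable fun t : ℝ => t ^ (-(1+θ)/2 : ℝ)).comp bse_meas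
    have hQm : Measurable fun j : ℝ × ℝ =>
        ENNReal.ofReal (bse j ^ ((1+θ)/2 : ℝ) * ‖f j‖) := by
      apply ENNReal.measurable_ofReal.comp
      exact (((by fun_prop : Measurable fun t : ℝ => t ^ ((1+θ)/2 : ℝ)).comp
        bse_meas).mul hf.norm)
    have hP2 : ∀ j, (ENNReal.ofReal (bse j ^ (-(1+θ)/2 : ℝ)))^2
        = ENNReal.ofReal (bse j ^ (-(1+θ) : ℝ)) := by
      intro j
      have hb := bse_pos j
      rw [← ENNReal.ofReal_pow (Real.rpow_nonneg hb.le _)]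
      congr 1
      rw [← rpow_two_eq, ← Real.rpow_mul hb.le]
      congr 1; ring
    have hQ2 : ∀ j, (ENNReal.ofReal (bse j ^ ((1+θ)/2 : ℝ) * ‖f j‖))^2
        = ENNReal.ofReal (wgt (1+θ) j * ‖f j‖^2) := by
      intro j
      have hb := bse_pos j
      rw [← ENNReal.ofReal_pow (by positivity)]
      congr 1
      rw [mul_pow, wgt_eq, ← rpow_two_eq, ← Real.rpow_mul hb.le]
      norm_num
    have hCS := lintegral_sq_CS volume
      (fun j : ℝ × ℝ => ENNReal.ofReal (bse j ^ (-(1+θ)/2 : ℝ)))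
      (fun j : ℝ × ℝ => ENNReal.ofReal (bse j ^ ((1+θ)/2 : ℝ) * ‖f j‖))
      hPm.aemeasurable hQm.aemeasurable
    simp_rw [hP2, hQ2] at hCS
    rw [hLf] at hCS
    calc (∫⁻ j, Fe j)^2
        = (ENNReal.ofReal 2 * ∫⁻ j, ENNReal.ofReal (bse j ^ (-(1+θ)/2 : ℝ))
            * ENNReal.ofReal (bse j ^ ((1+θ)/2 : ℝ) * ‖f j‖))^2 := by
          congr 1
          simp_rw [hsplit]
          rw [lintegral_const_mul' _ _ ENNReal.ofReal_ne_top]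
      _ = ENNReal.ofReal 2 ^ 2 * (∫⁻ j, ENNReal.ofReal (bse j ^ (-(1+θ)/2 : ℝ))
            * ENNReal.ofReal (bse j ^ ((1+θ)/2 : ℝ) * ‖f j‖))^2 := mul_pow _ _ _
      _ ≤ ENNReal.ofReal 2 ^ 2 * (Iθ * ENNReal.ofReal (YnormSq (1+θ) f)) :=
          mul_le_mul_right hCS _
      _ = ENNReal.ofReal 4 * Iθ * ENNReal.ofReal (YnormSq (1+θ) f) := by
          rw [← ENNReal.ofReal_pow (by norm_num : (0:ℝ) ≤ 2)]
          norm_num [mul_assoc]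
  -- bound on ∫⁻ He²
  have hHe2 : (∫⁻ j, (He j)^2) ≤ ENNReal.ofReal (YnormSq (1+θ) g) := by
    rw [← hLg]
    apply lintegral_mono
    intro j
    have hb := bse_pos j
    have hb1 := bse_one_le j
    simp only [hHedef]
    rw [← ENNReal.ofReal_pow (mul_nonneg (Real.rpow_nonneg hb.le _) (norm_nonneg _))]
    apply ENNReal.ofReal_le_ofReal
    rw [mul_pow, ← rpow_two_eq, ← Real.rpow_mul hb.le]
    have hble : bse j ^ ((1:ℝ)/2*2) ≤ bse j ^ ((1+θ):ℝ) := by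
      apply Real.rpow_le_rpow_of_exponent_le hb1
      norm_num; linarith
    rw [wgt_eq]
    exact mul_le_mul_of_nonneg_right hble (sq_nonneg _)
  have hHe2ne : (∫⁻ j, (He j)^2) ≠ ⊤ :=
    ne_top_of_le_ne_top ENNReal.ofReal_ne_top hHe2
  -- Fubini + translation invariance
  have hswap : (∫⁻ k : ℝ × ℝ, ∫⁻ j : ℝ × ℝ, Fe j * (He (k - j))^2)
      = (∫⁻ j, Fe j) * (∫⁻ j, (He j)^2) := by
    have hum : Measurable (Function.uncurry fun k j : ℝ × ℝ => Fe j * (He (k - j))^2) := by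
      apply Measurable.fun_mul
      · exact hFem.comp measurable_snd
      · exact ((hHem.comp (measurable_fst.sub measurable_snd)).pow_const 2)
    rw [lintegral_lintegral_swap hum.aemeasurable]
    have htr : ∀ j : ℝ × ℝ, (∫⁻ k : ℝ × ℝ, Fe j * (He (k - j))^2)
        = Fe j * ∫⁻ j', (He j')^2 := by
      intro j
      rw [lintegral_const_mul' _ _ ENNReal.ofReal_ne_top]
      congr 1
      exact lintegral_sub_right_eq_self (fun k => (He k)^2) j
    simp_rw [htr]
    exact lintegral_mul_const' _ _ hHe2ne
  have hFe_ne : (∫⁻ j, Fe j) ≠ ⊤ := by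
    intro htop
    have hfin : ENNReal.ofReal 4 * Iθ * ENNReal.ofReal (YnormSq (1+θ) f) ≠ ⊤ :=
      ENNReal.mul_ne_top (ENNReal.mul_ne_top ENNReal.ofReal_ne_top hIfin.ne)
        ENNReal.ofReal_ne_top
    rw [htop] at hFeCS
    rw [show (⊤:ℝ≥0∞)^2 = ⊤ from by simp] at hFeCS
    exact hfin (top_le_iff.mp hFeCS)
  -- main lintegral estimate
  have hmain : (∫⁻ k, ENNReal.ofReal (wgt (1+θ) k * ‖h k‖^2))
      ≤ ENNReal.ofReal ((c⁻¹)^2) * ENNReal.ofReal (ε/δ) ^ 2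
        * ((ENNReal.ofReal 4 * Iθ * ENNReal.ofReal (YnormSq (1+θ) f))
          * ENNReal.ofReal (YnormSq (1+θ) g)) := by
    have hCSk : ∀ k, (∫⁻ j, Fe j * He (k - j)) ^ 2
        ≤ (∫⁻ j, Fe j) * ∫⁻ j, Fe j * (He (k - j))^2 := by
      intro k
      exact lintegral_mul_sq_le volume Fe (fun j => He (k - j)) hFem.aemeasurable
        ((hHem.comp (measurable_const.sub measurable_id)).aemeasurable)
    calc (∫⁻ k, ENNReal.ofReal (wgt (1+θ) k * ‖h k‖^2))
        ≤ ∫⁻ k, ENNReal.ofReal ((c⁻¹)^2) * ENNReal.ofReal (ε/δ) ^ 2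
            * (∫⁻ j, Fe j * He (k - j)) ^ 2 := lintegral_mono hpoint
      _ = ENNReal.ofReal ((c⁻¹)^2) * ENNReal.ofReal (ε/δ) ^ 2
            * ∫⁻ k, (∫⁻ j, Fe j * He (k - j)) ^ 2 :=
          lintegral_const_mul' _ _
            (ENNReal.mul_ne_top ENNReal.ofReal_ne_top
              (ENNReal.pow_ne_top ENNReal.ofReal_ne_top))
      _ ≤ ENNReal.ofReal ((c⁻¹)^2) * ENNReal.ofReal (ε/δ) ^ 2
            * ∫⁻ k, (∫⁻ j, Fe j) * ∫⁻ j, Fe j * (He (k - j))^2 :=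
          mul_le_mul_right (lintegral_mono hCSk) _
      _ = ENNReal.ofReal ((c⁻¹)^2) * ENNReal.ofReal (ε/δ) ^ 2
            * ((∫⁻ j, Fe j) * ((∫⁻ j, Fe j) * (∫⁻ j, (He j)^2))) := by
          rw [lintegral_const_mul' (∫⁻ j, Fe j) _ hFe_ne, hswap]
      _ ≤ ENNReal.ofReal ((c⁻¹)^2) * ENNReal.ofReal (ε/δ) ^ 2
            * ((ENNReal.ofReal 4 * Iθ * ENNReal.ofReal (YnormSq (1+θ) f))
              * ENNReal.ofReal (YnormSq (1+θ) g)) := by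
          apply mul_le_mul_right
          calc (∫⁻ j, Fe j) * ((∫⁻ j, Fe j) * (∫⁻ j, (He j)^2))
              = (∫⁻ j, Fe j)^2 * (∫⁻ j, (He j)^2) := by ring
            _ ≤ (ENNReal.ofReal 4 * Iθ * ENNReal.ofReal (YnormSq (1+θ) f))
                * ENNReal.ofReal (YnormSq (1+θ) g) := mul_le_mul' hFeCS hHe2
  -- pass to real numbers
  have hfinRHS : ENNReal.ofReal ((c⁻¹)^2) * ENNReal.ofReal (ε/δ) ^ 2
      * ((ENNReal.ofReal 4 * Iθ * ENNReal.ofReal (YnormSq (1+θ) f))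
        * ENNReal.ofReal (YnormSq (1+θ) g)) ≠ ⊤ := by
    apply ENNReal.mul_ne_top
    · exact ENNReal.mul_ne_top ENNReal.ofReal_ne_top
        (ENNReal.pow_ne_top ENNReal.ofReal_ne_top)
    · exact ENNReal.mul_ne_top
        (ENNReal.mul_ne_top (ENNReal.mul_ne_top ENNReal.ofReal_ne_top hIfin.ne)
          ENNReal.ofReal_ne_top) ENNReal.ofReal_ne_top
  have hLHSreal : (∫⁻ k, ENNReal.ofReal (wgt (1+θ) k * ‖h k‖^2)).toReal
      ≤ K * ε^2 * YnormSq (1+θ) f * YnormSq (1+θ) g := by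
    have h1 := ENNReal.toReal_mono hfinRHS hmain
    rw [ENNReal.toReal_mul, ENNReal.toReal_mul, ENNReal.toReal_mul, ENNReal.toReal_mul,
      ENNReal.toReal_mul, ENNReal.toReal_pow, ENNReal.toReal_ofReal (by positivity),
      ENNReal.toReal_ofReal (by positivity), ENNReal.toReal_ofReal (by norm_num),
      ENNReal.toReal_ofReal hYfnn, ENNReal.toReal_ofReal hYgnn] at h1
    calc (∫⁻ k, ENNReal.ofReal (wgt (1+θ) k * ‖h k‖^2)).toReal
        ≤ (c⁻¹)^2 * (ε/δ)^2 * (4 * Iθ.toReal * YnormSq (1+θ) f * YnormSq (1+θ) g) := by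
          refine le_trans h1 (le_of_eq ?_)
          ring
      _ = K * ε^2 * YnormSq (1+θ) f * YnormSq (1+θ) g := by
          rw [hKdef]; ring
  have hYh : YnormSq (1+θ) h = (∫⁻ k, ENNReal.ofReal (wgt (1+θ) k * ‖h k‖^2)).toReal := by
    unfold YnormSq
    apply integral_eq_lintegral_of_nonneg_ae
    · exact Filter.Eventually.of_forall fun k => mul_nonneg (hwgt_nn k) (sq_nonneg _)
    · exact ((by unfold wgt; fun_prop : Measurable fun k : ℝ × ℝ => wgt (1+θ) k).mul
        (hhm.norm.pow_const 2)).aestronglyMeasurable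
  rw [hYh]
  calc Real.sqrt ((∫⁻ k, ENNReal.ofReal (wgt (1+θ) k * ‖h k‖^2)).toReal)
      ≤ Real.sqrt (K * ε^2 * YnormSq (1+θ) f * YnormSq (1+θ) g) :=
        Real.sqrt_le_sqrt hLHSreal
    _ = Real.sqrt K * ε * Real.sqrt (YnormSq (1+θ) f) * Real.sqrt (YnormSq (1+θ) g) := by
        rw [Real.sqrt_mul (mul_nonneg (mul_nonneg hKnn (sq_nonneg ε)) hYfnn),
          Real.sqrt_mul (mul_nonneg hKnn (sq_nonneg ε)),
          Real.sqrt_mul hKnn, Real.sqrt_sq hε.le]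
    _ ≤ (Real.sqrt K + 1) * ε * Real.sqrt (YnormSq (1+θ) f) * Real.sqrt (YnormSq (1+θ) g) := by
        have h1 : Real.sqrt K ≤ Real.sqrt K + 1 := by linarith
        gcongr
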